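/- Let C = C₁ ⊔ C₂ and let B be a conjunction of literals with domain exactly C₁ and target values b : C₁ → {0,1}. Suppose every variable in C₂ has a positive monotonic effect on D relative to C (D is nondecreasing in each coordinate of C₂). If there is ω* ∈ Ω such that (i) D at the assignment equal to b on C₁ and 0 on C₂ equals 1 for ω*, and (ii) for every i ∈ C₁, D at the assignment equal to b on C₁ ∖ {i}, equal to 1 − b(i) at i, and 0 on C₂, equals 0 for ω*, then B is a minimal sufficient cause for D relative to C for ω*. -/

import Mathlib

/-- An assignment of values to the binary causes indexed by `ι`. -/
abbrev Assign (ι : Type*) := ι → Bool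

/-- A conjunction of literals over `ι`: a partial assignment, where `B i = some v`
means the literal at coordinate `i` has target value `v`, and `B i = none` means
`i` is not in the domain of the conjunction. -/
abbrev Conj (ι : Type*) := ι → Option Bool

/-- An assignment `c` satisfies a conjunction of literals `B`. -/
def Satisfies {ι : Type*} (c : Assign ι) (B : Conj ι) : Prop :=
  ∀ i v, B i = some v → c i = v

/-- `B'` extends `B` : the domain of `B'` contains that of `B` and they agree there. -/
def ConjExtends {ι : Type*} (B B' : Conj ι) : Prop :=
  ∀ i v, B i = some v → B' i = some v

/-- `(A, 𝔅)` is a sufficient cause representation for the family of potential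
outcomes `D`. -/
def IsRepresentation {ι Ω : Type*} (D : Ω → Assign ι → Bool)
    {p : ℕ} (A : Fin p → Ω → Bool) (𝔅 : Fin p → Conj ι) : Prop :=
  ∀ (ω : Ω) (c : Assign ι),
    D ω c = true ↔ ∃ j, A j ω = true ∧ Satisfies c (𝔅 j)

/-- `B` is irreducible for `D(C, Ω)`: every sufficient cause representation
contains some conjunction extending `B`. -/
def IrreducibleConj {ι Ω : Type*} (D : Ω → Assign ι → Bool) (B : Conj ι) : Prop :=
  ∀ (p : ℕ) (A : Fin p → Ω → Bool) (𝔅 : Fin p → Conj ι),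
    IsRepresentation D A 𝔅 → ∃ j, ConjExtends B (𝔅 j)

/-- `B` is a sufficient cause for `D` for the individual `ω`. -/
def SuffCauseFor {ι Ω : Type*} (D : Ω → Assign ι → Bool) (B : Conj ι) (ω : Ω) : Prop :=
  ∀ c : Assign ι, Satisfies c B → D ω c = true

/-- `B` is a minimal sufficient cause for `D` for `ω`: it is a sufficient cause,
but no restriction of `B` to a proper subset of its domain is. -/
def MinSuffCauseFor {ι Ω : Type*} (D : Ω → Assign ι → Bool) (B : Conj ι) (ω : Ω) : Prop :=
  SuffCauseFor D B ω ∧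
    ∀ B' : Conj ι, ConjExtends B' B → B' ≠ B → ¬ SuffCauseFor D B' ω

/-- `B` is a singular (minimal sufficient) cause for `ω`: it is the unique minimal
sufficient cause for `ω`. -/
def SingularFor {ι Ω : Type*} (D : Ω → Assign ι → Bool) (B : Conj ι) (ω : Ω) : Prop :=
  MinSuffCauseFor D B ω ∧ ∀ B' : Conj ι, B' ≠ B → ¬ MinSuffCauseFor D B' ω

/-- `B` is singular for `D(C, Ω)`: it is singular for some individual. -/
def Singular {ι Ω : Type*} (D : Ω → Assign ι → Bool) (B : Conj ι) : Prop :=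
  ∃ ω : Ω, SingularFor D B ω

/-- The literal at coordinate `i` with target value `v` has a positive monotonic
effect on `D` relative to `C`. -/
def PosMonotone {ι Ω : Type*} [DecidableEq ι] (D : Ω → Assign ι → Bool)
    (i : ι) (v : Bool) : Prop :=
  ∀ (ω : Ω) (c : Assign ι),
    D ω (Function.update c i (!v)) = true → D ω (Function.update c i v) = true

/-- `T` is a tree on the finite vertex set `V`: a set of unordered pairs of
distinct elements of `V` with `|T| = |V| - 1` such that any two vertices of `V`
are connected by a path of edges of `T`. -/
def IsTreeOn {ι : Type*} (V : Finset ι) (T : Finset (Sym2 ι)) : Prop :=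
  (∀ e ∈ T, ¬ e.IsDiag ∧ ∀ i ∈ e, i ∈ V) ∧
  T.card = V.card - 1 ∧
  (∀ x ∈ V, ∀ y ∈ V, Relation.ReflTransGen (fun a b => s(a, b) ∈ T) x y)


/-- Proposition 4.4: test for a minimal sufficient cause under
positive monotonicity of the variables in `C₂`. -/
theorem minSuffCause_of_monotone {ι Ω : Type*} [Fintype ι] [DecidableEq ι]
    [Nonempty ι] [Nonempty Ω]
    (D : Ω → Assign ι → Bool) (C₁ C₂ : Finset ι)
    (hdisj : Disjoint C₁ C₂) (hunion : C₁ ∪ C₂ = Finset.univ)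
    (b : ι → Bool)
    (hmono : ∀ i ∈ C₂, PosMonotone D i true)
    (ω : Ω)
    (h1 : D ω (fun i => if i ∈ C₁ then b i else false) = true)
    (h2 : ∀ i ∈ C₁,
      D ω (fun j => if j = i then !(b j) else if j ∈ C₁ then b j else false) = false) :
    MinSuffCauseFor D (fun i => if i ∈ C₁ then some (b i) else none) ω := by
  constructor
  · -- sufficiency
    intro c hc
    have key : ∀ s : Finset ι, (∀ i ∈ s, i ∈ C₂) →
        ∀ c' : Assign ι, (∀ i ∈ C₁, c' i = b i) →
        (∀ i, c' i = true → i ∈ C₁ ∨ i ∈ s) → D ω c' = true := by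
      intro s
      induction s using Finset.induction_on with
      | empty =>
        intro _ c' hC1 htrue
        have : c' = (fun i => if i ∈ C₁ then b i else false) := by
          funext i
          by_cases hi : i ∈ C₁
          · simp [hi, hC1 i hi]
          · simp [hi]
            cases h : c' i with
            | false => rfl
            | true => rcases htrue i h with h' | h' <;> simp_all
        rw [this]; exact h1
      | @insert a s _ ih =>
        intro hsub c' hC1 htrue
        have haC2 : a ∈ C₂ := hsub a (Finset.mem_insert_self a s)
        have haC1 : a ∉ C₁ := fun h => (Finset.disjoint_left.mp hdisj h) haC2
        set c'' : Assign ι := Function.update c' a false with hc''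
        have hdc'' : D ω c'' = true := by
          apply ih (fun i hi => hsub i (Finset.mem_insert_of_mem hi))
          · intro i hi
            have : i ≠ a := fun h => haC1 (h ▸ hi)
            simp [hc'', Function.update_of_ne this, hC1 i hi]
          · intro i hi
            by_cases hia : i = a
            · subst hia; simp [hc''] at hi
            · rw [hc'', Function.update_of_ne hia] at hi
              rcases htrue i hi with h' | h'
              · exact Or.inl h'
              · exact Or.inr (by
                  rcases Finset.mem_insert.mp h' with h'' | h''
                  · exact absurd h'' hia
                  · exact h'')
        cases hca : c' a with
        | false =>
          have : c' = c'' := by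
            funext i; by_cases hia : i = a
            · subst hia; simp [hc'', hca]
            · simp [hc'', Function.update_of_ne hia]
          rw [this]; exact hdc''
        | true =>
          have h3 : Function.update c'' a false = c'' := by
            funext i; by_cases hia : i = a
            · subst hia; simp [hc'']
            · simp [Function.update_of_ne hia]
          have := hmono a haC2 ω c'' (by rw [show (!true) = false from rfl, h3]; exact hdc'')
          have h4 : Function.update c'' a true = c' := by
            funext i; by_cases hia : i = a
            · subst hia; simp [hca]
            · simp [Function.update_of_ne hia, hc'']
          rwa [h4] at this
    apply key C₂ (fun i hi => hi) c
    · intro i hi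
      exact hc i (b i) (by simp [hi])
    · intro i _
      by_cases hi : i ∈ C₁
      · exact Or.inl hi
      · refine Or.inr ?_
        have := Finset.mem_univ i
        rw [← hunion, Finset.mem_union] at this
        tauto
  · -- minimality
    intro B' hext hne hsuff
    have : ∃ i, B' i ≠ (fun i => if i ∈ C₁ then some (b i) else none) i := by
      by_contra h
      push_neg at h
      exact hne (funext h)
    obtain ⟨i, hi⟩ := this
    have hBi' : B' i = none := by
      cases h : B' i with
      | none => rfl
      | some v => exact (hi (h.trans (hext i v h).symm)).elim
    have hiC1 : i ∈ C₁ := by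
      by_contra h
      simp [h, hBi'] at hi
    have hsat : Satisfies (fun j => if j = i then !(b j) else if j ∈ C₁ then b j else false) B' := by
      intro j v hj
      have hBj := hext j v hj
      by_cases hjC1 : j ∈ C₁
      · simp [hjC1] at hBj
        have hji : j ≠ i := fun h => by rw [h, hBi'] at hj; cases hj
        simp [hji, hjC1, hBj]
      · simp [hjC1] at hBj
    have := hsuff _ hsat
    rw [h2 i hiC1] at this
    exact Bool.noConfusion this
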